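/- Let f : ℝ^n → ℝ be convex and continuous, let σ > 0, η > 0, and let f_η denote the Moreau envelope of f. Then f is σ-strongly convex on ℝ^n if and only if f_η is σ/(ησ + 1)-strongly convex on ℝ^n. -/

import Mathlib

noncomputable section
open Real Set Filter Topology
open scoped RealInnerProductSpace

set_option linter.unusedSectionVars false

variable {F : Type*} [NormedAddCommGroup F] [InnerProductSpace ℝ F]

lemma me_norm_comb (a b : ℝ) (u v : F) :
    ‖a • u + b • v‖ ^ 2 = a^2 * ‖u‖^2 + 2*a*b*⟪u, v⟫ + b^2 * ‖v‖^2 := by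
  rw [norm_add_sq_real, real_inner_smul_left, real_inner_smul_right, norm_smul, norm_smul]
  simp [mul_pow, sq_abs]
  ring
lemma me_minorant [ProperSpace F] (f : F → ℝ) (hconv : ConvexOn ℝ Set.univ f)
    (hcont : Continuous f) : ∃ C : ℝ, 0 ≤ C ∧ ∀ u, f 0 - C * ‖u‖ ≤ f u := by
  obtain ⟨M, hM⟩ : ∃ M, ∀ e ∈ Metric.closedBall (0:F) 1, |f e| ≤ M := by
    have hc : IsCompact (Metric.closedBall (0:F) 1) := isCompact_closedBall 0 1
    obtain ⟨M, hM⟩ := hc.exists_bound_of_continuousOn hcont.continuousOn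
    exact ⟨M, hM⟩
  have hM0 : 0 ≤ M := le_trans (abs_nonneg _) (hM 0 (by simp))
  refine ⟨M + |f 0|, by positivity, fun u => ?_⟩
  rcases eq_or_ne u 0 with rfl | hu
  · simp
  have hr : 0 < ‖u‖ := norm_pos_iff.mpr hu
  set r := ‖u‖ with hrdef
  rcases le_or_gt r 1 with h1 | h1
  · set e : F := -(r⁻¹ • u) with he
    have hene : ‖e‖ = 1 := by
      rw [he, norm_neg, norm_smul, norm_inv, Real.norm_eq_abs, abs_of_pos hr]
      field_simp
      exact hrdef.symm
    have hfe : |f e| ≤ M := hM e (by simp [Metric.mem_closedBall, hene])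
    have hcomb : (1/(1+r)) • u + (r/(1+r)) • e = (0:F) := by
      rw [he, smul_neg, smul_smul]
      have hh : r / (1 + r) * r⁻¹ = 1/(1+r) := by field_simp
      rw [hh, ← sub_eq_add_neg, sub_self]
    have hkey := hconv.2 (Set.mem_univ u) (Set.mem_univ e)
      (show (0:ℝ) ≤ 1/(1+r) by positivity) (show (0:ℝ) ≤ r/(1+r) by positivity)
      (show 1/(1+r) + r/(1+r) = 1 by field_simp)
    rw [hcomb] at hkey
    simp only [smul_eq_mul] at hkey
    have habs : f e ≤ M := (abs_le.mp hfe).2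
    have h1r : (0:ℝ) < 1 + r := by linarith
    have hkey2 : (1+r) * f 0 ≤ f u + r * f e := by
      have h2 := mul_le_mul_of_nonneg_left hkey (le_of_lt h1r)
      field_simp at h2
      linarith
    nlinarith [mul_nonneg hr.le (show (0:ℝ) ≤ f 0 - f e + M + |f 0| by
      nlinarith [neg_abs_le (f 0)])]
  · set e : F := r⁻¹ • u with he
    have hene : ‖e‖ = 1 := by
      rw [he, norm_smul, norm_inv, Real.norm_eq_abs, abs_of_pos hr]
      field_simp
      exact hrdef.symm
    have hfe : |f e| ≤ M := hM e (by simp [Metric.mem_closedBall, hene])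
    have hcomb : (r⁻¹) • u + (1 - r⁻¹) • (0:F) = e := by simp [he]
    have hkey := hconv.2 (Set.mem_univ u) (Set.mem_univ (0:F))
      (show (0:ℝ) ≤ r⁻¹ by positivity)
      (show (0:ℝ) ≤ 1 - r⁻¹ by rw [sub_nonneg, inv_le_one_iff₀]; right; linarith)
      (show r⁻¹ + (1 - r⁻¹) = 1 by ring)
    rw [hcomb] at hkey
    simp only [smul_eq_mul] at hkey
    have habs : -M ≤ f e := (abs_le.mp hfe).1
    have hrinv : 0 < r⁻¹ := by positivity
    have hkey2 : r * f e ≤ f u + (r - 1) * f 0 := by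
      have h2 := mul_le_mul_of_nonneg_left hkey hr.le
      have hru : r * r⁻¹ = 1 := mul_inv_cancel₀ (ne_of_gt hr)
      have h3 : r * (r⁻¹ * f u + (1 - r⁻¹) * f 0) = f u + (r - 1) * f 0 := by
        field_simp
      linarith [h3 ▸ h2]
    nlinarith [mul_nonneg hr.le (show (0:ℝ) ≤ f e - f 0 + M + |f 0| by
      nlinarith [le_abs_self (f 0)])]
lemma me_young {μ C t : ℝ} (hμ : 0 < μ) : C * t ≤ (1/(2*μ)) * t^2 + μ * C^2/2 := by
  have h2 : 2*μ*(C*t) ≤ t^2 + μ^2*C^2 := by nlinarith [sq_nonneg (t - μ*C)]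
  have h3 : (t^2 + μ^2*C^2)/(2*μ) = (1/(2*μ)) * t^2 + μ*C^2/2 := by field_simp
  rw [← h3, le_div_iff₀ (by positivity)]
  linarith

lemma me_bddBelow (f : F → ℝ) {C : ℝ} (hC : 0 ≤ C) (hmin : ∀ u, f 0 - C * ‖u‖ ≤ f u)
    {μ : ℝ} (hμ : 0 < μ) (x : F) :
    ∀ u, f 0 - C*‖x‖ - μ*C^2/2 ≤ f u + (1/(2*μ)) * ‖u - x‖^2 := by
  intro u
  have h1 : ‖u‖ ≤ ‖x‖ + ‖u - x‖ := by
    have hxu : x + (u - x) = u := by abel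
    calc ‖u‖ = ‖x + (u - x)‖ := by rw [hxu]
    _ ≤ ‖x‖ + ‖u - x‖ := norm_add_le _ _
  have h2 : C * ‖u - x‖ ≤ (1/(2*μ)) * ‖u - x‖^2 + μ*C^2/2 := me_young hμ
  have h3 := hmin u
  nlinarith [mul_le_mul_of_nonneg_left h1 hC]

lemma me_bddBelow' (f : F → ℝ) {C : ℝ} (hC : 0 ≤ C) (hmin : ∀ u, f 0 - C * ‖u‖ ≤ f u)
    {μ : ℝ} (hμ : 0 < μ) (x : F) :
    BddBelow (Set.range fun u => f u + (1/(2*μ)) * ‖u - x‖^2) := by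
  refine ⟨f 0 - C*‖x‖ - μ*C^2/2, ?_⟩
  rintro _ ⟨u, rfl⟩
  exact me_bddBelow f hC hmin hμ x u

lemma me_prox_exists [ProperSpace F] (f : F → ℝ) (hcont : Continuous f)
    {C : ℝ} (hC : 0 ≤ C) (hmin : ∀ u, f 0 - C * ‖u‖ ≤ f u)
    {μ : ℝ} (hμ : 0 < μ) (x : F) :
    ∃ z, ∀ v, f z + (1/(2*μ)) * ‖z - x‖^2 ≤ f v + (1/(2*μ)) * ‖v - x‖^2 := by
  set G : F → ℝ := fun v => f v + (1/(2*μ)) * ‖v - x‖^2 with hG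
  have hGcont : Continuous G := by fun_prop
  set K : ℝ := max (f x - f 0 + C*‖x‖) 0 with hK
  have hK0 : 0 ≤ K := le_max_right _ _
  have hKx : f x - f 0 + C*‖x‖ ≤ K := le_max_left _ _
  set R : ℝ := 4*μ*C + 4*μ + K + 1 with hR
  have hR0 : 0 < R := by positivity
  obtain ⟨z, hzB, hz⟩ := (isCompact_closedBall x R).exists_isMinOn
    ⟨x, Metric.mem_closedBall_self hR0.le⟩ hGcont.continuousOn
  refine ⟨z, fun v => ?_⟩
  rcases le_or_gt ‖v - x‖ R with hv | hv
  · exact hz (by simpa [Metric.mem_closedBall, dist_eq_norm] using hv)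
  · have hx' : G z ≤ G x := hz (Metric.mem_closedBall_self hR0.le)
    have hGx : G x = f x := by simp [hG]
    refine le_trans (hGx ▸ hx') ?_
    -- f x ≤ G v
    set t : ℝ := ‖v - x‖ with ht
    have htR : R ≤ t := hv.le
    have h1 : ‖v‖ ≤ ‖x‖ + t := by
      have hxv : x + (v - x) = v := by abel
      calc ‖v‖ = ‖x + (v - x)‖ := by rw [hxv]
      _ ≤ ‖x‖ + t := norm_add_le _ _
    have h2 : f 0 - C*(‖x‖ + t) ≤ f v := by
      have := hmin v
      nlinarith [mul_le_mul_of_nonneg_left h1 hC]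
    have h3 : 2*μ*(K + C*t) ≤ t^2 := by
      have ht1 : 1 ≤ t := by nlinarith
      have htK : K ≤ t := by nlinarith
      nlinarith [mul_le_mul_of_nonneg_left htR (show (0:ℝ) ≤ t by linarith)]
    have h4 : K + C*t ≤ (1/(2*μ)) * t^2 := by
      rw [one_div, inv_mul_eq_div, le_div_iff₀ (by positivity)]
      linarith
    show f x ≤ f v + (1/(2*μ)) * t^2
    nlinarith

lemma me_prox_subgrad (f : F → ℝ) (hconv : ConvexOn ℝ Set.univ f)
    {μ : ℝ} (hμ : 0 < μ) {x z : F}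
    (hz : ∀ v, f z + (1/(2*μ)) * ‖z - x‖^2 ≤ f v + (1/(2*μ)) * ‖v - x‖^2) :
    ∀ v, f z + ⟪μ⁻¹ • (x - z), v - z⟫ ≤ f v := by
  intro v
  have key : ∀ t : ℝ, 0 < t → t ≤ 1 →
      f z + ⟪μ⁻¹ • (x - z), v - z⟫ ≤ f v + t * (1/(2*μ)) * ‖v - z‖^2 := by
    intro t ht0 ht1
    have hcomb := hconv.2 (Set.mem_univ z) (Set.mem_univ v)
      (show (0:ℝ) ≤ 1 - t by linarith) (show (0:ℝ) ≤ t by linarith)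
      (show (1-t) + t = 1 by ring)
    simp only [smul_eq_mul] at hcomb
    have hpt : (1-t) • z + t • v - x = (z - x) + t • (v - z) := by
      rw [sub_smul, one_smul, smul_sub]; abel
    have hmin := hz ((1-t) • z + t • v)
    rw [hpt] at hmin
    have hexp : ‖(z - x) + t • (v - z)‖^2
        = ‖z-x‖^2 + 2*t*⟪z-x, v-z⟫ + t^2*‖v-z‖^2 := by
      have := me_norm_comb (F := F) 1 t (z - x) (v - z)
      simpa using this
    rw [hexp] at hmin
    -- hmin : f z + (1/(2μ))‖z-x‖² ≤ f((1-t)z+tv) + (1/(2μ))(...)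
    -- hcomb : f((1-t)z+tv) ≤ (1-t) f z + t f v
    have hinner : ⟪μ⁻¹ • (x - z), v - z⟫ = μ⁻¹ * (-⟪z - x, v - z⟫) := by
      rw [real_inner_smul_left]
      congr 1
      rw [show x - z = -(z - x) by abel, inner_neg_left]
    rw [hinner]
    have hsplit : (1/(2*μ)) * (‖z-x‖^2 + 2*t*⟪z-x, v-z⟫ + t^2*‖v-z‖^2)
        = (1/(2*μ)) * ‖z-x‖^2 + t*((1/μ)*⟪z-x, v-z⟫) + t*(t*(1/(2*μ))*‖v-z‖^2) := by
      field_simp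
    rw [hsplit] at hmin
    have h3 : f z + (1/μ) * (-⟪z-x, v-z⟫) ≤ f v + t * (1/(2*μ)) * ‖v-z‖^2 := by
      have h4 : t * (f z + (1/μ) * (-⟪z-x, v-z⟫)) ≤ t * (f v + t * (1/(2*μ)) * ‖v-z‖^2) := by
        ring_nf
        ring_nf at hmin hcomb
        linarith
      exact le_of_mul_le_mul_left (by linarith [h4]) ht0
    rw [one_div] at h3
    exact h3
  -- let t → 0
  refine le_of_forall_pos_le_add fun ε hε => ?_
  set Q := ‖v - z‖^2 with hQ
  have hQ0 : 0 ≤ Q := by positivity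
  set t := min 1 (2*μ*ε/(Q+1)) with htdef
  have ht0 : 0 < t := lt_min one_pos (by positivity)
  have ht1 : t ≤ 1 := min_le_left _ _
  have h5 := key t ht0 ht1
  have h6 : t * (1/(2*μ)) * Q ≤ ε := by
    have h7 : t ≤ 2*μ*ε/(Q+1) := min_le_right _ _
    have h8 : t * (1/(2*μ)) * Q ≤ (2*μ*ε/(Q+1)) * (1/(2*μ)) * Q := by
      apply mul_le_mul_of_nonneg_right _ hQ0
      apply mul_le_mul_of_nonneg_right h7 (by positivity)
    refine h8.trans ?_
    rw [div_mul_eq_mul_div, div_mul_eq_mul_div, div_le_iff₀ (by positivity)]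
    have : Q ≤ Q + 1 := by linarith
    calc 2*μ*ε * (1/(2*μ)) * Q = ε * Q := by field_simp
    _ ≤ ε * (Q+1) := by nlinarith
  linarith

lemma me_upper (f : F → ℝ) {C : ℝ} (hC : 0 ≤ C) (hmin : ∀ u, f 0 - C * ‖u‖ ≤ f u)
    {η : ℝ} (hη : 0 < η) (fη : F → ℝ)
    (hfη : ∀ x, fη x = ⨅ u, f u + (1/(2*η)) * ‖u - x‖^2) (x u : F) :
    fη x ≤ f u + (1/(2*η)) * ‖u - x‖^2 := by
  rw [hfη]
  exact ciInf_le (me_bddBelow' f hC hmin hη x) u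

lemma me_key (f : F → ℝ) (hconv : ConvexOn ℝ Set.univ f)
    {C : ℝ} (hC : 0 ≤ C) (hmin : ∀ u, f 0 - C * ‖u‖ ≤ f u)
    {σ η : ℝ} (hσ : 0 < σ) (hη : 0 < η)
    (fη : F → ℝ) (hfη : ∀ x, fη x = ⨅ u, f u + (1/(2*η)) * ‖u - x‖^2)
    (hsc : StrongConvexOn Set.univ (σ/(η*σ+1)) fη)
    {z w : F} (hw : ∀ v, f z + ⟪w, v - z⟫ ≤ f v) :
    ∀ y, f z + ⟪w, y - z⟫ + σ/2*‖y - z‖^2 ≤ f y := by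
  intro y
  set c : ℝ := σ/(η*σ+1) with hc
  have hησ : 0 < η*σ+1 := by positivity
  set A : F := z + η • w with hA
  set q : ℝ := ‖w‖^2 with hq
  have hq0 : 0 ≤ q := by positivity
  -- 5a : fη A ≤ f z + η/2 * q
  have h5a : fη A ≤ f z + η/2 * q := by
    refine (me_upper f hC hmin hη fη hfη A z).trans (le_of_eq ?_)
    have hzA : z - A = (-η) • w := by rw [hA]; module
    rw [hzA, norm_smul]
    simp only [Real.norm_eq_abs, abs_neg, abs_of_pos hη, mul_pow]
    field_simp
    ring
  -- 5b : lower bound for fη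
  have h5b : ∀ x' : F, f z + ⟪w, x' - z⟫ - η/2 * q ≤ fη x' := by
    intro x'
    rw [hfη]
    refine le_ciInf fun u => ?_
    have h1 := hw u
    have hexp : ‖(x'-u) + (-η) • w‖^2 = ‖x'-u‖^2 - 2*η*⟪x'-u, w⟫ + η^2*q := by
      have := me_norm_comb (F := F) 1 (-η) (x'-u) w
      rw [hq]; simp at this ⊢; linarith
    have hpos : (0:ℝ) ≤ (1/(2*η)) * ‖(x'-u) + (-η) • w‖^2 := by positivity
    rw [hexp] at hpos
    have hcom : ⟪x' - u, w⟫ = ⟪w, x' - u⟫ := real_inner_comm _ _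
    rw [hcom] at hpos
    have hiwxu : ⟪w, x' - z⟫ = ⟪w, u - z⟫ + ⟪w, x' - u⟫ := by
      rw [← inner_add_right]
      congr 1
      abel
    have hnorm : ‖u - x'‖ = ‖x' - u‖ := norm_sub_rev _ _
    have hsplit : (1/(2*η)) * (‖x'-u‖^2 - 2*η*⟪w, x' - u⟫ + η^2*q)
        = (1/(2*η)) * ‖x'-u‖^2 - ⟪w, x' - u⟫ + η/2*q := by
      field_simp
    rw [hsplit] at hpos
    rw [hiwxu, hnorm]
    linarith
  have h5a' : f z + η/2 * q ≤ fη A := by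
    have := h5b A
    have hAz : A - z = η • w := by rw [hA]; abel
    rw [hAz, real_inner_smul_right, real_inner_self_eq_norm_sq, ← hq] at this
    linarith
  -- 5c : subgradient inequality for fη at A
  have h5c : ∀ x' : F, fη A + ⟪w, x' - A⟫ ≤ fη x' := by
    intro x'
    have h1 := h5b x'
    have hsub : ⟪w, x' - A⟫ = ⟪w, x' - z⟫ - η * q := by
      rw [hA, show x' - (z + η • w) = (x' - z) - η • w by abel, inner_sub_right,
        real_inner_smul_right, real_inner_self_eq_norm_sq, ← hq]
    rw [hsub]
    linarith
  -- 5d : strong subgradient inequality for fη at A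
  have h5d : ∀ B : F, fη A + ⟪w, B - A⟫ + c/2*‖B-A‖^2 ≤ fη B := by
    intro B
    set G : ℝ := fη B - fη A - ⟪w, B - A⟫ with hG
    set Q : ℝ := c/2*‖B-A‖^2 with hQdef
    have hQ0 : 0 ≤ Q := by positivity
    have hGt : ∀ t : ℝ, 0 < t → t < 1 → (1-t)*Q ≤ G := by
      intro t ht0 ht1
      have hcomb := hsc.2 (Set.mem_univ A) (Set.mem_univ B)
        (show (0:ℝ) ≤ 1-t by linarith) (show (0:ℝ) ≤ t by linarith)
        (show (1-t) + t = 1 by ring)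
      simp only [smul_eq_mul] at hcomb
      have hx' : (1-t) • A + t • B - A = t • (B - A) := by module
      have h2 := h5c ((1-t) • A + t • B)
      rw [hx', real_inner_smul_right] at h2
      have hABBA : ‖A - B‖ = ‖B - A‖ := norm_sub_rev _ _
      rw [hABBA] at hcomb
      rw [← hQdef] at hcomb
      have h3 : t * ((1-t)*Q) ≤ t * G := by
        rw [hG]
        ring_nf
        ring_nf at h2 hcomb
        linarith
      exact le_of_mul_le_mul_left (by linarith [h3]) ht0
    have hQG : Q ≤ G := by
      refine le_of_forall_pos_le_add fun ε hε => ?_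
      have ht0 : 0 < min (1/2) (ε/(Q+1)) := lt_min (by norm_num) (by positivity)
      have ht1 : min (1/2) (ε/(Q+1)) < 1 := lt_of_le_of_lt (min_le_left _ _) (by norm_num)
      have h4 := hGt _ ht0 ht1
      have h5 : min (1/2) (ε/(Q+1)) * Q ≤ ε := by
        have h6 : min (1/2) (ε/(Q+1)) ≤ ε/(Q+1) := min_le_right _ _
        have h7 : min (1/2) (ε/(Q+1)) * Q ≤ (ε/(Q+1)) * Q :=
          mul_le_mul_of_nonneg_right h6 hQ0
        refine h7.trans ?_
        rw [div_mul_eq_mul_div, div_le_iff₀ (by positivity)]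
        nlinarith
      nlinarith
    rw [hG, hQdef] at hQG
    linarith
  -- main computation
  set B : F := y + (η*σ) • (y - z) + η • w with hB
  have hBA : B - A = (η*σ+1) • (y - z) := by rw [hB, hA, add_smul, one_smul]; module
  have hyB : y - B = (-(η*σ)) • (y - z) + (-η) • w := by rw [hB]; module
  have h6 := me_upper f hC hmin hη fη hfη B y
  have h7 := h5d B
  rw [hBA] at h7
  have hnBA : ‖(η*σ+1) • (y - z)‖^2 = (η*σ+1)^2 * ‖y-z‖^2 := by
    rw [norm_smul, Real.norm_eq_abs, abs_of_pos hησ, mul_pow]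
  have hiBA : ⟪w, (η*σ+1) • (y - z)⟫ = (η*σ+1) * ⟪w, y - z⟫ := real_inner_smul_right _ _ _
  have hnyB : ‖y - B‖^2 = (η*σ)^2*‖y-z‖^2 + 2*(η*σ)*η*⟪y-z, w⟫ + η^2*q := by
    rw [hyB]
    have := me_norm_comb (F := F) (-(η*σ)) (-η) (y-z) w
    rw [this]
    ring
  rw [hnBA, hiBA] at h7
  rw [hnyB] at h6
  have hsym : ⟪y-z, w⟫ = ⟪w, y-z⟫ := real_inner_comm _ _
  rw [hsym] at h6
  set p : ℝ := ‖y-z‖^2 with hp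
  set r : ℝ := ⟪w, y - z⟫ with hr
  -- arithmetic identity
  have harith : f z + η/2*q + (η*σ+1)*r + c/2*((η*σ+1)^2*p)
      - (1/(2*η))*((η*σ)^2*p + 2*(η*σ)*η*r + η^2*q) = f z + r + σ/2*p := by
    rw [hc]
    field_simp
    ring
  have hsplit2 : (1/(2*η))*((η*σ)^2*p + 2*(η*σ)*η*r + η^2*q)
      = (1/(2*η))*((η*σ)^2*p) + σ*η*r + η/2*q := by
    field_simp
  linarith [h5a', h6, h7, harith, hsplit2]

lemma me_forward [ProperSpace F] (f : F → ℝ) (hconv : ConvexOn ℝ Set.univ f)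
    (hcont : Continuous f) {σ η : ℝ} (hσ : 0 < σ) (hη : 0 < η)
    (fη : F → ℝ) (hfη : ∀ x, fη x = ⨅ u, f u + (1/(2*η)) * ‖u - x‖^2)
    (hf : StrongConvexOn Set.univ σ f) :
    StrongConvexOn Set.univ (σ/(η*σ+1)) fη := by
  obtain ⟨C, hC, hmin⟩ := me_minorant f hconv hcont
  set c : ℝ := σ/(η*σ+1) with hc
  have hησ : 0 < η*σ+1 := by positivity
  refine ⟨convex_univ, fun x _ y _ a b ha hb hab => ?_⟩
  simp only [smul_eq_mul]
  rcases eq_or_lt_of_le ha with ha0 | ha0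
  · have hb1 : b = 1 := by linarith
    rw [← ha0, hb1]
    simp
  rcases eq_or_lt_of_le hb with hb0 | hb0
  · have ha1 : a = 1 := by linarith
    rw [← hb0, ha1]
    simp
  set α : ℝ := σ + 1/η with hα
  have hα0 : 0 < α := by positivity
  have key : ∀ u' v', fη (a•x+b•y) ≤ a*(f u' + (1/(2*η))*‖u'-x‖^2)
      + b*(f v' + (1/(2*η))*‖v'-y‖^2) - a*b*(c/2*‖x-y‖^2) := by
    intro u' v'
    have hup := me_upper f hC hmin hη fη hfη (a•x+b•y) (a•u'+b•v')
    have hfc := hf.2 (Set.mem_univ u') (Set.mem_univ v') ha hb hab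
    simp only [smul_eq_mul] at hfc
    set P : F := u' - x with hP
    set Q : F := v' - y with hQ
    set d : F := x - y with hd
    set e : F := P - Q with he
    have hvec : a•u'+b•v' - (a•x+b•y) = a•P + b•Q := by rw [hP, hQ]; module
    have hexp1 : ‖a•P+b•Q‖^2 = a^2*‖P‖^2 + 2*a*b*⟪P,Q⟫ + b^2*‖Q‖^2 :=
      me_norm_comb a b P Q
    have heex : ‖e‖^2 = ‖P‖^2 - 2*⟪P,Q⟫ + ‖Q‖^2 := by
      have := me_norm_comb (F := F) 1 (-1) P Q
      simpa [he, sub_eq_add_neg] using this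
    have huv : u' - v' = d + e := by rw [hd, he, hP, hQ]; module
    have hde : ‖d+e‖^2 = ‖d‖^2 + 2*⟪d,e⟫ + ‖e‖^2 := by
      have := me_norm_comb (F := F) 1 1 d e
      simpa using this
    have hsq : ‖σ•d + α•e‖^2 = σ^2*‖d‖^2 + 2*σ*α*⟪d,e⟫ + α^2*‖e‖^2 :=
      me_norm_comb σ α d e
    have hkey0 : c*‖d‖^2 ≤ (1/η)*‖e‖^2 + σ*‖d+e‖^2 := by
      have h0 : (0:ℝ) ≤ (1/α)*‖σ•d + α•e‖^2 := by positivity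
      rw [hsq] at h0
      have hid : (1/η)*‖e‖^2 + σ*(‖d‖^2 + 2*⟪d,e⟫ + ‖e‖^2) - c*‖d‖^2
          = (1/α)*(σ^2*‖d‖^2 + 2*σ*α*⟪d,e⟫ + α^2*‖e‖^2) := by
        rw [hc, hα]
        field_simp
        ring
      rw [hde]
      linarith
    have hdist : (1/(2*η))*(a^2*‖P‖^2 + 2*a*b*⟪P,Q⟫ + b^2*‖Q‖^2)
        = a*((1/(2*η))*‖P‖^2) + b*((1/(2*η))*‖Q‖^2)
          - a*b*((1/(2*η))*(‖P‖^2 - 2*⟪P,Q⟫ + ‖Q‖^2)) := by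
      have hab' : b = 1 - a := by linarith
      rw [hab']
      field_simp
      ring
    rw [hvec, hexp1] at hup
    rw [huv] at hfc
    -- combine
    have hmul := mul_le_mul_of_nonneg_left hkey0 (show (0:ℝ) ≤ a*b/2 by positivity)
    have hsplit3 : a*b/2*((1/η)*‖e‖^2) = a*b*((1/(2*η))*‖e‖^2) := by
      field_simp
    rw [← heex] at hdist
    linarith [hup, hfc, hmul, hdist, hsplit3]
  -- now pass to the infima
  have step : fη (a•x+b•y) + a*b*(c/2*‖x-y‖^2) ≤ a * fη x + b * fη y := by
    have h1 : ∀ v', fη (a•x+b•y) + a*b*(c/2*‖x-y‖^2) - a * fη x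
        ≤ b * (f v' + (1/(2*η))*‖v'-y‖^2) := by
      intro v'
      have h3 : (fη (a•x+b•y) + a*b*(c/2*‖x-y‖^2)
          - b*(f v' + (1/(2*η))*‖v'-y‖^2)) / a ≤ fη x := by
        rw [hfη x]
        refine le_ciInf fun u' => ?_
        rw [div_le_iff₀ ha0]
        have := key u' v'
        linarith [mul_comm (f u' + (1/(2*η))*‖u'-x‖^2) a]
      rw [div_le_iff₀ ha0] at h3
      linarith [mul_comm (fη x) a]
    have h4 : (fη (a•x+b•y) + a*b*(c/2*‖x-y‖^2) - a * fη x) / b ≤ fη y := by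
      rw [hfη y]
      refine le_ciInf fun v' => ?_
      rw [div_le_iff₀ hb0]
      linarith [h1 v', mul_comm (f v' + (1/(2*η))*‖v'-y‖^2) b]
    rw [div_le_iff₀ hb0] at h4
    linarith [mul_comm (fη y) b]
  linarith

lemma me_reverse [ProperSpace F] (f : F → ℝ) (hconv : ConvexOn ℝ Set.univ f)
    (hcont : Continuous f) {σ η : ℝ} (hσ : 0 < σ) (hη : 0 < η)
    (fη : F → ℝ) (hfη : ∀ x, fη x = ⨅ u, f u + (1/(2*η)) * ‖u - x‖^2)
    (hsc : StrongConvexOn Set.univ (σ/(η*σ+1)) fη) :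
    StrongConvexOn Set.univ σ f := by
  obtain ⟨C, hC, hmin⟩ := me_minorant f hconv hcont
  refine ⟨convex_univ, fun u _ v _ a b ha hb hab => ?_⟩
  simp only [smul_eq_mul]
  rcases eq_or_lt_of_le ha with ha0 | ha0
  · have hb1 : b = 1 := by linarith
    rw [← ha0, hb1]
    simp
  rcases eq_or_lt_of_le hb with hb0 | hb0
  · have ha1 : a = 1 := by linarith
    rw [← hb0, ha1]
    simp
  set m : F := a • u + b • v with hm
  set μ : ℕ → ℝ := fun k => η/(2*(k+1)) with hμ
  have hμpos : ∀ k, 0 < μ k := fun k => by positivity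
  have hμle : ∀ k, μ k ≤ η/2 := by
    intro k
    rw [hμ]
    rw [div_le_div_iff₀ (by positivity) (by positivity)]
    have : (1:ℝ) ≤ (k+1 : ℕ) := by exact_mod_cast Nat.one_le_iff_ne_zero.mpr (Nat.succ_ne_zero k)
    push_cast
    nlinarith
  have hzex : ∀ k, ∃ z, ∀ v', f z + (1/(2*(μ k))) * ‖z - m‖^2
      ≤ f v' + (1/(2*(μ k))) * ‖v' - m‖^2 :=
    fun k => me_prox_exists f hcont hC hmin (hμpos k) m
  choose z hz using hzex
  set w : ℕ → F := fun k => (μ k)⁻¹ • (m - z k) with hw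
  have hsub : ∀ k v', f (z k) + ⟪w k, v' - z k⟫ ≤ f v' :=
    fun k => me_prox_subgrad f hconv (hμpos k) (hz k)
  have hkey : ∀ k y, f (z k) + ⟪w k, y - z k⟫ + σ/2*‖y - z k‖^2 ≤ f y :=
    fun k => me_key f hconv hC hmin hσ hη fη hfη hsc (hsub k)
  -- combine at u and v
  have star : ∀ k, f (z k) + σ/2*(a*‖u - z k‖^2 + b*‖v - z k‖^2) ≤ a * f u + b * f v := by
    intro k
    have h1 := hkey k u
    have h2 := hkey k v
    have hcomb : a • (u - z k) + b • (v - z k) = m - z k := by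
      have h3 : a • (u - z k) + b • (v - z k) = a • u + b • v - (a+b) • z k := by module
      rw [h3, hab, one_smul, hm]
    have hinner : a * ⟪w k, u - z k⟫ + b * ⟪w k, v - z k⟫ = ⟪w k, m - z k⟫ := by
      rw [← real_inner_smul_right, ← real_inner_smul_right, ← inner_add_right, hcomb]
    have hpos : (0:ℝ) ≤ ⟪w k, m - z k⟫ := by
      rw [hw]
      simp only [real_inner_smul_left]
      rw [real_inner_self_eq_norm_sq]
      positivity
    have hfz : a * f (z k) + b * f (z k) = f (z k) := by
      have h9 : a * f (z k) + b * f (z k) = (a+b) * f (z k) := by ring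
      rw [h9, hab, one_mul]
    nlinarith [mul_le_mul_of_nonneg_left h1 ha, mul_le_mul_of_nonneg_left h2 hb, hfz]
  -- the prox points converge to m
  have hfηm : fη m ≤ f m := by
    have := me_upper f hC hmin hη fη hfη m m
    simpa using this
  set K : ℝ := f m - fη m with hK
  have hK0 : 0 ≤ K := by rw [hK]; linarith
  have hdist : ∀ k, ‖z k - m‖^2 ≤ 4*K*(μ k) := by
    intro k
    have h1 := hz k m
    simp only [sub_self, norm_zero] at h1
    -- h1 : f (z k) + (1/(2 μ k)) ‖z k - m‖² ≤ f m + (1/(2 μ k)) * 0^2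
    have h2 := me_upper f hC hmin hη fη hfη m (z k)
    set D : ℝ := ‖z k - m‖^2 with hD
    have hD0 : 0 ≤ D := by positivity
    have h3 : (1/(2*(μ k))) * D - (1/(2*η)) * D ≤ K := by
      rw [hK]
      linarith
    have h4 : (1/(2*η)) * D ≤ (1/(4*(μ k))) * D := by
      apply mul_le_mul_of_nonneg_right _ hD0
      rw [div_le_div_iff₀ (by positivity) (by positivity)]
      linarith [hμle k]
    have h5 : (1/(4*(μ k))) * D ≤ K := by
      have h6 : (1/(2*(μ k))) * D - (1/(4*(μ k))) * D = (1/(4*(μ k))) * D := by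
        field_simp
        ring
      linarith
    rw [one_div, inv_mul_eq_div, div_le_iff₀ (by positivity)] at h5
    linarith
  have hztend : Filter.Tendsto z Filter.atTop (nhds m) := by
    rw [tendsto_iff_norm_sub_tendsto_zero]
    apply squeeze_zero (fun k => norm_nonneg _)
      (fun k => Real.le_sqrt_of_sq_le (hdist k))
    have hμtend : Filter.Tendsto (fun k : ℕ => 4*K*(μ k)) Filter.atTop (nhds 0) := by
      have h7 : Filter.Tendsto (fun k : ℕ => (1:ℝ)/(k+1)) Filter.atTop (nhds 0) :=
        tendsto_one_div_add_atTop_nhds_zero_nat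
      have h8 : (fun k : ℕ => 4*K*(μ k)) = fun k : ℕ => (4*K*(η/2)) * ((1:ℝ)/(k+1)) := by
        funext k
        rw [hμ]
        field_simp
      rw [h8]
      simpa using h7.const_mul (4*K*(η/2))
    have := (Real.continuous_sqrt.tendsto 0).comp hμtend
    simpa [Function.comp_def] using this
  -- pass to the limit in star
  have hΦ : Filter.Tendsto (fun k => f (z k) + σ/2*(a*‖u - z k‖^2 + b*‖v - z k‖^2))
      Filter.atTop (nhds (f m + σ/2*(a*‖u - m‖^2 + b*‖v - m‖^2))) := by
    have hcontΦ : Continuous fun zz : F => f zz + σ/2*(a*‖u - zz‖^2 + b*‖v - zz‖^2) := by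
      fun_prop
    exact (hcontΦ.tendsto m).comp hztend
  have hlim : f m + σ/2*(a*‖u - m‖^2 + b*‖v - m‖^2) ≤ a * f u + b * f v :=
    le_of_tendsto hΦ (Filter.Eventually.of_forall star)
  -- final algebra
  have hum : u - m = b • (u - v) := by
    rw [hm, show a = 1 - b by linarith]
    module
  have hvm : v - m = (-a) • (u - v) := by
    rw [hm, show b = 1 - a by linarith]
    module
  have hnum : ‖u - m‖^2 = b^2 * ‖u-v‖^2 := by
    rw [hum, norm_smul, Real.norm_eq_abs, abs_of_pos hb0, mul_pow]
  have hnvm : ‖v - m‖^2 = a^2 * ‖u-v‖^2 := by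
    rw [hvm, norm_smul, Real.norm_eq_abs, abs_neg, abs_of_pos ha0, mul_pow]
  rw [hnum, hnvm] at hlim
  have hfinal : a*(b^2*‖u-v‖^2) + b*(a^2*‖u-v‖^2) = (a*b)*‖u-v‖^2*(a+b) := by ring
  rw [hab, mul_one] at hfinal
  nlinarith [hlim]

/-- `f` is `σ`-strongly convex iff its Moreau envelope `f_η` is
`σ/(ησ+1)`-strongly convex. -/
theorem moreau_envelope_strong_convexity
    {n : ℕ} (f : EuclideanSpace ℝ (Fin n) → ℝ)
    (hconv : ConvexOn ℝ Set.univ f) (hcont : Continuous f)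
    (σ η : ℝ) (hσ : 0 < σ) (hη : 0 < η)
    (fη : EuclideanSpace ℝ (Fin n) → ℝ)
    (hfη : ∀ x, fη x = ⨅ u : EuclideanSpace ℝ (Fin n),
      (f u + (1 / (2 * η)) * ‖u - x‖ ^ 2)) :
    StrongConvexOn Set.univ σ f ↔ StrongConvexOn Set.univ (σ / (η * σ + 1)) fη :=
  ⟨me_forward f hconv hcont hσ hη fη hfη,
   me_reverse f hconv hcont hσ hη fη hfη⟩
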